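/- Let d ≥ 1 be an integer and suppose there exists an orthogonal array OA(d, d+1), i.e., a function A : {1,...,d²} × {1,...,d+1} → {1,...,d} such that for every pair of distinct columns j ≠ j', the map sending a row i to the ordered pair (A(i,j), A(i,j')) is a bijection from {1,...,d²} to {1,...,d}². Let H be the complete (d+1)-partite graph with every part of size d. Then H has a clique partition 𝒞 in which every vertex of H lies in exactly d cliques of 𝒞; in particular scp(H) ≤ d²(d+1). -/

import Mathlib

open Finset

/-- A clique covering of `G`: a finite family of cliques covering every edge. -/
def IsCliqueCover {V : Type*} (G : SimpleGraph V) (𝒞 : Finset (Finset V)) : Prop :=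
  (∀ C ∈ 𝒞, G.IsClique (C : Set V)) ∧
  ∀ u v, G.Adj u v → ∃ C ∈ 𝒞, u ∈ C ∧ v ∈ C

/-- A clique partition of `G`: every edge lies in exactly one clique of the family. -/
def IsCliquePartition {V : Type*} (G : SimpleGraph V) (𝒞 : Finset (Finset V)) : Prop :=
  (∀ C ∈ 𝒞, G.IsClique (C : Set V)) ∧
  ∀ u v, G.Adj u v → ∃! C, C ∈ 𝒞 ∧ u ∈ C ∧ v ∈ C

/-- The sigma clique cover number: minimum total size of cliques in a clique covering. -/
noncomputable def scc {V : Type*} (G : SimpleGraph V) : ℕ :=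
  sInf {k | ∃ 𝒞, IsCliqueCover G 𝒞 ∧ ∑ C ∈ 𝒞, C.card = k}

/-- The sigma clique partition number: minimum total size of cliques in a clique partition. -/
noncomputable def scp {V : Type*} (G : SimpleGraph V) : ℕ :=
  sInf {k | ∃ 𝒞, IsCliquePartition G 𝒞 ∧ ∑ C ∈ 𝒞, C.card = k}

/-- The clique cover number: minimum number of cliques in a clique covering. -/
noncomputable def cc {V : Type*} (G : SimpleGraph V) : ℕ :=
  sInf {k | ∃ 𝒞, IsCliqueCover G 𝒞 ∧ 𝒞.card = k}

/-- The clique partition number: minimum number of cliques in a clique partition. -/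
noncomputable def cp {V : Type*} (G : SimpleGraph V) : ℕ :=
  sInf {k | ∃ 𝒞, IsCliquePartition G 𝒞 ∧ 𝒞.card = k}

/-- `scc'`: the minimum total size of cliques over clique coverings achieving `cc G`. -/
noncomputable def scc' {V : Type*} (G : SimpleGraph V) : ℕ :=
  sInf {k | ∃ 𝒞, IsCliqueCover G 𝒞 ∧ 𝒞.card = cc G ∧ ∑ C ∈ 𝒞, C.card = k}

/-- The complete `(d+1)`-partite graph with every part of size `d`: vertices are pairs
`(j, a)` with `j` the part index, and two vertices are adjacent iff their parts differ. -/
def completeMultipartite (d : ℕ) : SimpleGraph (Fin (d + 1) × Fin d) where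
  Adj u v := u.1 ≠ v.1
  symm := ⟨fun _ _ h => h.symm⟩
  loopless := ⟨fun _ h => h rfl⟩

/-- If there is an orthogonal array `OA(d, d+1)`, then the complete `(d+1)`-partite graph `H`
with parts of size `d` has a clique partition in which every vertex lies in exactly `d`
cliques; in particular `scp(H) ≤ d²(d+1)`. -/
theorem stmt_13 (d : ℕ) (hd : 1 ≤ d) (A : Fin (d ^ 2) → Fin (d + 1) → Fin d)
    (hA : ∀ j j' : Fin (d + 1), j ≠ j' →
      Function.Bijective fun i : Fin (d ^ 2) => (A i j, A i j')) :
    (∃ 𝒞 : Finset (Finset (Fin (d + 1) × Fin d)),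
      IsCliquePartition (completeMultipartite d) 𝒞 ∧
      ∀ v : Fin (d + 1) × Fin d, (𝒞.filter fun C => v ∈ C).card = d) ∧
    scp (completeMultipartite d) ≤ d ^ 2 * (d + 1) := by
  classical
  set f : Fin (d ^ 2) → Finset (Fin (d + 1) × Fin d) :=
    fun i => Finset.univ.image (fun j => (j, A i j)) with hf
  have hmem : ∀ i (v : Fin (d + 1) × Fin d), v ∈ f i ↔ v.2 = A i v.1 := by
    intro i v
    simp only [hf, Finset.mem_image, Finset.mem_univ, true_and]
    constructor
    · rintro ⟨j, rfl⟩; rfl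
    · intro h; exact ⟨v.1, by rw [← h]⟩
  have h01 : (0 : Fin (d + 1)) ≠ 1 := by
    have h1 : (1 : Fin (d + 1)).val = 1 := by
      rw [Fin.val_one']; exact Nat.mod_eq_of_lt (by omega)
    exact Fin.ne_of_val_ne (by simp [h1]; omega)
  have hfinj : Function.Injective f := by
    intro i i' h
    have h0 : A i 0 = A i' 0 := by
      have := (hmem i' (0, A i 0)).1 (h ▸ (hmem i (0, A i 0)).2 rfl)
      exact this
    have h1 : A i 1 = A i' 1 := by
      have := (hmem i' (1, A i 1)).1 (h ▸ (hmem i (1, A i 1)).2 rfl)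
      exact this
    exact (hA 0 1 h01).1 (by simp [h0, h1])
  have hcliq : ∀ i, (completeMultipartite d).IsClique (f i : Set _) := by
    intro i u hu v hv huv
    rw [Finset.mem_coe] at hu hv
    have hu' := (hmem i u).1 hu
    have hv' := (hmem i v).1 hv
    show u.1 ≠ v.1
    intro h
    exact huv (Prod.ext h (by rw [hu', hv', h]))
  refine ⟨⟨Finset.univ.image f, ⟨?_, ?_⟩, ?_⟩, ?_⟩
  · intro C hC
    simp only [Finset.mem_image, Finset.mem_univ, true_and] at hC
    obtain ⟨i, rfl⟩ := hC
    exact hcliq i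
  · intro u v huv
    have hne : u.1 ≠ v.1 := huv
    obtain ⟨i, hi⟩ := (hA u.1 v.1 hne).2 (u.2, v.2)
    simp only [Prod.mk.injEq] at hi
    refine ⟨f i, ⟨Finset.mem_image_of_mem f (Finset.mem_univ i),
      (hmem i u).2 hi.1.symm, (hmem i v).2 hi.2.symm⟩, ?_⟩
    rintro C ⟨hC, huC, hvC⟩
    simp only [Finset.mem_image, Finset.mem_univ, true_and] at hC
    obtain ⟨i', rfl⟩ := hC
    congr 1
    apply (hA u.1 v.1 hne).1
    simp only [Prod.mk.injEq]
    rw [← (hmem i' u).1 huC, ← (hmem i' v).1 hvC, hi.1, hi.2]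
    exact ⟨rfl, rfl⟩
  · -- every vertex in exactly d cliques
    intro v
    rw [Finset.filter_image, Finset.card_image_of_injective _ hfinj]
    have hcount : (Finset.univ.filter fun i => v ∈ f i) =
        Finset.univ.filter fun i => A i v.1 = v.2 := by
      apply Finset.filter_congr
      intro i _
      rw [hmem]
      exact ⟨Eq.symm, Eq.symm⟩
    rw [hcount]
    -- pick a column j' ≠ v.1
    obtain ⟨j', hj'⟩ : ∃ j' : Fin (d + 1), j' ≠ v.1 := by
      have : 1 < Fintype.card (Fin (d + 1)) := by simp; omega
      exact Fintype.exists_ne_of_one_lt_card this v.1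
    have hb := hA v.1 j' (Ne.symm hj')
    have : (Finset.univ.filter fun i => A i v.1 = v.2).card =
        (Finset.univ.filter fun p : Fin d × Fin d => p.1 = v.2).card := by
      apply Finset.card_bij (fun i _ => (A i v.1, A i j'))
      · intro i hi
        simp only [Finset.mem_filter, Finset.mem_univ, true_and] at hi ⊢
        exact hi
      · intro i hi i' hi' h
        exact hb.1 h
      · intro p hp
        simp only [Finset.mem_filter, Finset.mem_univ, true_and] at hp
        obtain ⟨i, hi⟩ := hb.2 p
        refine ⟨i, ?_, hi⟩
        simp only [Finset.mem_filter, Finset.mem_univ, true_and]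
        have : A i v.1 = p.1 := congrArg Prod.fst hi
        rw [this, hp]
    rw [this]
    have : (Finset.univ.filter fun p : Fin d × Fin d => p.1 = v.2) =
        {v.2} ×ˢ Finset.univ := by
      ext p
      simp [Finset.mem_product, eq_comm, Prod.ext_iff]
    rw [this, Finset.card_product]
    simp
  · -- scp bound
    apply Nat.sInf_le
    refine ⟨Finset.univ.image f, ⟨?_, ?_⟩, ?_⟩
    · intro C hC
      simp only [Finset.mem_image, Finset.mem_univ, true_and] at hC
      obtain ⟨i, rfl⟩ := hC
      exact hcliq i
    · intro u v huv
      have hne : u.1 ≠ v.1 := huv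
      obtain ⟨i, hi⟩ := (hA u.1 v.1 hne).2 (u.2, v.2)
      simp only [Prod.mk.injEq] at hi
      refine ⟨f i, ⟨Finset.mem_image_of_mem f (Finset.mem_univ i),
        (hmem i u).2 hi.1.symm, (hmem i v).2 hi.2.symm⟩, ?_⟩
      rintro C ⟨hC, huC, hvC⟩
      simp only [Finset.mem_image, Finset.mem_univ, true_and] at hC
      obtain ⟨i', rfl⟩ := hC
      congr 1
      apply (hA u.1 v.1 hne).1
      simp only [Prod.mk.injEq]
      rw [← (hmem i' u).1 huC, ← (hmem i' v).1 hvC, hi.1, hi.2]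
      exact ⟨rfl, rfl⟩
    · rw [Finset.sum_image (fun i _ i' _ h => hfinj h)]
      have hcard : ∀ i, (f i).card = d + 1 := by
        intro i
        rw [hf]
        rw [Finset.card_image_of_injective]
        · simp
        · intro j j' h
          exact congrArg Prod.fst h
      simp [hcard, mul_comm]
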